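/- Let K be a field. The kernel of the K-algebra map K[x_{00}, x_{10}, x_{01}, x_{11}] → K[s,t,u] sending x_{00} ↦ u, x_{10} ↦ su, x_{01} ↦ tu, x_{11} ↦ stu is the principal ideal generated by x_{00}x_{11} − x_{10}x_{01}. -/

import Mathlib

open MvPolynomial

noncomputable section ToricAux

variable (K : Type*) [Field K]

/-- the exponent map -/
def toricE (m : Fin 4 →₀ ℕ) : Fin 3 →₀ ℕ :=
  Finsupp.single 0 (m 1 + m 3) + Finsupp.single 1 (m 2 + m 3) +
    Finsupp.single 2 (m 0 + m 1 + m 2 + m 3)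

lemma toricE_apply0 (m : Fin 4 →₀ ℕ) : toricE m 0 = m 1 + m 3 := by
  simp [toricE, Finsupp.single_apply]

lemma toricE_apply1 (m : Fin 4 →₀ ℕ) : toricE m 1 = m 2 + m 3 := by
  simp [toricE, Finsupp.single_apply]

lemma toricE_apply2 (m : Fin 4 →₀ ℕ) : toricE m 2 = m 0 + m 1 + m 2 + m 3 := by
  simp [toricE, Finsupp.single_apply]

lemma toricE_inj (m m' : Fin 4 →₀ ℕ) (hm : m 0 = 0 ∨ m 3 = 0) (hm' : m' 0 = 0 ∨ m' 3 = 0)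
    (h : toricE m = toricE m') : m = m' := by
  have h0 := congrArg (fun f => f 0) h
  have h1 := congrArg (fun f => f 1) h
  have h2 := congrArg (fun f => f 2) h
  simp only [toricE_apply0, toricE_apply1, toricE_apply2] at h0 h1 h2
  ext i
  fin_cases i
  · show m 0 = m' 0; omega
  · show m 1 = m' 1; omega
  · show m 2 = m' 2; omega
  · show m 3 = m' 3; omega

lemma toric_aeval_monomial (m : Fin 4 →₀ ℕ) (c : K) :
    (aeval (![X 2, X 0 * X 2, X 1 * X 2, X 0 * X 1 * X 2] : Fin 4 → MvPolynomial (Fin 3) K))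
      (monomial m c) = monomial (toricE m) c := by
  rw [aeval_monomial]
  rw [Finsupp.prod_fintype _ _ (fun i => pow_zero _)]
  rw [Fin.prod_univ_four]
  rw [monomial_eq]
  rw [Finsupp.prod_fintype _ _ (fun i => pow_zero _)]
  rw [Fin.prod_univ_three]
  simp only [Matrix.cons_val_zero, Matrix.cons_val_one, Matrix.head_cons,
    Matrix.cons_val_two, Matrix.tail_cons, Matrix.cons_val_three,
    toricE_apply0, toricE_apply1, toricE_apply2]
  rw [algebraMap_eq]
  ring

end ToricAux

section Main

variable (K : Type*) [Field K]

/-- reduced polynomials: no monomial divisible by X 0 * X 3 -/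
def ToricRed (r : MvPolynomial (Fin 4) K) : Prop :=
  ∀ m : Fin 4 →₀ ℕ, m 0 ≠ 0 → m 3 ≠ 0 → coeff m r = 0

lemma toric_div (f : MvPolynomial (Fin 4) K) :
    ∃ g r, f = ((X 0 : MvPolynomial (Fin 4) K) * X 3 - X 1 * X 2) * g + r ∧ ToricRed K r := by
  induction f using MvPolynomial.induction_on' with
  | add p q hp hq =>
    obtain ⟨gp, rp, hgp, hrp⟩ := hp
    obtain ⟨gq, rq, hgq, hrq⟩ := hq
    refine ⟨gp + gq, rp + rq, by rw [hgp, hgq]; ring, fun m h0 h3 => ?_⟩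
    simp [coeff_add, hrp m h0 h3, hrq m h0 h3]
  | monomial m c =>
    obtain ⟨n, hn⟩ : ∃ n, m 0 = n := ⟨_, rfl⟩
    induction n using Nat.strong_induction_on generalizing m c with
    | _ n ih =>
    by_cases h0 : m 0 = 0
    · exact ⟨0, monomial m c, by ring, fun m' h0' h3' => by
        rw [coeff_monomial]; split
        · next h => exact absurd (h ▸ h0) h0'
        · rfl⟩
    by_cases h3 : m 3 = 0
    · exact ⟨0, monomial m c, by ring, fun m' h0' h3' => by
        rw [coeff_monomial]; split
        · next h => exact absurd (h ▸ h3) h3'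
        · rfl⟩
    -- reduce
    set m' : Fin 4 →₀ ℕ := m - Finsupp.single 0 1 - Finsupp.single 3 1 with hm'
    have key : (monomial m c : MvPolynomial (Fin 4) K) =
        ((X 0 : MvPolynomial (Fin 4) K) * X 3 - X 1 * X 2) * monomial m' c +
          monomial (m' + Finsupp.single 1 1 + Finsupp.single 2 1) c := by
      have hX : ∀ i : Fin 4, (X i : MvPolynomial (Fin 4) K) = monomial (Finsupp.single i 1) 1 :=
        fun i => rfl
      rw [hX, hX, hX, hX, sub_mul, monomial_mul, monomial_mul, monomial_mul, monomial_mul]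
      have e1 : Finsupp.single (0 : Fin 4) 1 + Finsupp.single 3 1 + m' = m := by
        ext i
        fin_cases i <;>
          simp [hm', Finsupp.single_apply, Finsupp.tsub_apply] <;> omega
      rw [← e1]
      have e2 : ((fun₀ | (1:Fin 4) => (1:ℕ)) + fun₀ | 2 => 1) + m' = (m' + fun₀ | 1 => 1) + fun₀ | 2 => 1 := by
        abel
      rw [e2, one_mul, one_mul]
      ring
    have hm'0 : m' 0 = n - 1 := by
      simp [hm', Finsupp.tsub_apply, Finsupp.single_apply]
      omega
    have hlt : ((m' + Finsupp.single 1 1 + Finsupp.single 2 1 : Fin 4 →₀ ℕ)) 0 = n - 1 := by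
      simp [Finsupp.add_apply, Finsupp.single_apply, hm'0]
    obtain ⟨g, r, hg, hr⟩ := ih (n-1) (by omega) _ c hlt
    exact ⟨monomial m' c + g, r, by rw [key, hg]; ring, hr⟩

end Main


/-- The toric ideal of the unit square: the kernel of the `K`-algebra map
`K[x₀₀,x₁₀,x₀₁,x₁₁] → K[s,t,u]`, `x₀₀ ↦ u`, `x₁₀ ↦ su`, `x₀₁ ↦ tu`, `x₁₁ ↦ stu`, is
the principal ideal generated by `x₀₀x₁₁ − x₁₀x₀₁`. -/
theorem stmt_16 (K : Type*) [Field K] :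
    RingHom.ker (MvPolynomial.aeval
        (![X 2, X 0 * X 2, X 1 * X 2, X 0 * X 1 * X 2] : Fin 4 → MvPolynomial (Fin 3) K) :
      MvPolynomial (Fin 4) K →ₐ[K] MvPolynomial (Fin 3) K).toRingHom =
    Ideal.span {(X 0 : MvPolynomial (Fin 4) K) * X 3 - X 1 * X 2} := by
  set v : Fin 4 → MvPolynomial (Fin 3) K := ![X 2, X 0 * X 2, X 1 * X 2, X 0 * X 1 * X 2] with hv
  have hq0 : (aeval v) ((X 0 : MvPolynomial (Fin 4) K) * X 3 - X 1 * X 2) = 0 := by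
    simp only [map_sub, map_mul, aeval_X, hv, Matrix.cons_val_zero, Matrix.cons_val_one,
      Matrix.head_cons, Matrix.cons_val_two, Matrix.tail_cons, Matrix.cons_val_three]
    ring
  apply le_antisymm
  · intro f hf
    rw [RingHom.mem_ker] at hf
    obtain ⟨g, r, hg, hr⟩ := toric_div K f
    have hr0 : (aeval v) r = 0 := by
      have := congrArg (aeval v) hg
      have hf' : (aeval v) f = 0 := hf
      rw [hf', map_add, map_mul, hq0, zero_mul, zero_add] at this
      exact this.symm
    have : r = 0 := by
      apply MvPolynomial.ext
      intro m
      rw [coeff_zero]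
      by_cases hm : m 0 ≠ 0 ∧ m 3 ≠ 0
      · exact hr m hm.1 hm.2
      push_neg at hm
      have hmN : m 0 = 0 ∨ m 3 = 0 := by by_cases h : m 0 = 0; exact Or.inl h; exact Or.inr (hm h)
      have hsupp : ∀ m' ∈ r.support, m' 0 = 0 ∨ m' 3 = 0 := by
        intro m' hm'
        by_contra hcon
        push_neg at hcon
        exact (MvPolynomial.mem_support_iff.mp hm') (hr m' hcon.1 hcon.2)
      have key : coeff (toricE m) ((aeval v) r) = coeff m r := by
        conv_lhs => rw [r.as_sum]
        rw [map_sum]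
        rw [coeff_sum]
        have : ∀ m' ∈ r.support,
            coeff (toricE m) ((aeval v) (monomial m' (coeff m' r))) =
              if m' = m then coeff m' r else 0 := by
          intro m' hm'
          rw [toric_aeval_monomial, coeff_monomial]
          congr 1
          simp only [eq_iff_iff]
          constructor
          · intro h; exact toricE_inj m' m (hsupp m' hm') hmN h
          · intro h; rw [h]
        rw [Finset.sum_congr rfl this, Finset.sum_ite_eq']
        split
        · rfl
        · next h => exact (MvPolynomial.notMem_support_iff.mp h).symm
      rw [hr0, coeff_zero] at key
      exact key.symm
    rw [this, add_zero] at hg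
    exact Ideal.mem_span_singleton.mpr ⟨g, hg⟩
  · rw [Ideal.span_le]
    intro x hx
    rw [Set.mem_singleton_iff] at hx
    subst hx
    exact hq0
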